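/- Let x_1 ≠ x_2 ∈ ℝ^d and Y = (y_1, y_2) ∈ (ℝ^d)^2, and set m_k = #{j ∈ {1,2} : y_j = x_k} for k = 1, 2. Then the JS-GAN loss takes the following values: if (m_1, m_2) = (1,1) then φ_JS(Y, X) = −log 2; if (m_1, m_2) ∈ {(1,0), (0,1)} then φ_JS(Y, X) = −(1/2)·log 2; if (m_1, m_2) ∈ {(2,0), (0,2)} then φ_JS(Y, X) = (1/4)·log(1/3) + (1/2)·log(2/3); if (m_1, m_2) = (0,0) then φ_JS(Y, X) = 0. -/

import Mathlib

open scoped BigOperators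

/-- The JS-GAN loss
φ_JS(Y, X) = sup over continuous D : ℝ^d → (0,1) of
(1/(2n)) · Σ_i [log D(x_i) + log(1 − D(y_i))]. -/
noncomputable def phiJS {d n : ℕ} (x Y : Fin n → EuclideanSpace ℝ (Fin d)) : ℝ :=
  sSup {s : ℝ | ∃ D : EuclideanSpace ℝ (Fin d) → ℝ, Continuous D ∧
    (∀ u, D u ∈ Set.Ioo (0 : ℝ) 1) ∧
    s = (1 / (2 * (n : ℝ))) * ∑ i, (Real.log (D (x i)) + Real.log (1 - D (Y i)))}


lemma exists_interp {E : Type*} [MetricSpace E] (s : Finset E) (v : E → ℝ)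
    (hv : ∀ p ∈ s, v p ∈ Set.Ioo (0:ℝ) 1) :
    ∃ D : E → ℝ, Continuous D ∧ (∀ u, D u ∈ Set.Ioo (0:ℝ) 1) ∧ ∀ p ∈ s, D p = v p := by
  classical
  obtain ⟨δ, hδ, hsep⟩ : ∃ δ : ℝ, 0 < δ ∧ ∀ p ∈ s, ∀ q ∈ s, p ≠ q → 2*δ ≤ dist p q := by
    rcases s.offDiag.eq_empty_or_nonempty with he | hne
    · exact ⟨1, one_pos, fun p hp q hq hpq =>
        absurd (show (p, q) ∈ s.offDiag from Finset.mem_offDiag.2 ⟨hp, hq, hpq⟩)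
          (by simp [he])⟩
    · refine ⟨(s.offDiag.inf' hne fun pq => dist pq.1 pq.2)/2, ?_, ?_⟩
      · have h1 : (0:ℝ) < s.offDiag.inf' hne fun pq => dist pq.1 pq.2 :=
          (Finset.lt_inf'_iff hne).2 fun pq hpq =>
            dist_pos.2 (Finset.mem_offDiag.1 hpq).2.2
        linarith
      · intro p hp q hq hpq
        have h2 : (s.offDiag.inf' hne fun pq => dist pq.1 pq.2) ≤ dist p q :=
          Finset.inf'_le _ (show (p, q) ∈ s.offDiag from Finset.mem_offDiag.2 ⟨hp, hq, hpq⟩)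
        linarith
  set B : E → E → ℝ := fun p u => max 0 (1 - dist u p / δ) with hB
  have hB0 : ∀ p u, 0 ≤ B p u := fun p u => le_max_left _ _
  have hB1 : ∀ p u, B p u ≤ 1 := by
    intro p u
    apply max_le (by norm_num)
    have h1 : 0 ≤ dist u p / δ := div_nonneg dist_nonneg hδ.le
    linarith
  have hBpp : ∀ p, B p p = 1 := by intro p; simp [hB]
  have hBpos : ∀ p u, B p u ≠ 0 → dist u p < δ := by
    intro p u h
    by_contra hc
    push_neg at hc
    apply h
    have h1 : 1 - dist u p / δ ≤ 0 := by
      rw [sub_nonpos, le_div_iff₀ hδ]; linarith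
    simp [hB, max_eq_left h1]
  have hBzero : ∀ p ∈ s, ∀ q ∈ s, q ≠ p → B q p = 0 := by
    intro p hp q hq hqp
    by_contra h
    have := hBpos q p h
    have h2 := hsep q hq p hp hqp
    rw [dist_comm] at h2
    linarith
  refine ⟨fun u => 1/2 + ∑ p ∈ s, (v p - 1/2) * B p u, ?_, ?_, ?_⟩
  · apply Continuous.add continuous_const
    apply continuous_finset_sum
    intro p _
    exact Continuous.mul continuous_const
      (continuous_const.max (continuous_const.sub
        ((continuous_id.dist continuous_const).div_const δ)))
  · intro u
    show 1/2 + ∑ p ∈ s, (v p - 1/2) * B p u ∈ Set.Ioo (0:ℝ) 1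
    by_cases hall : ∀ p ∈ s, B p u = 0
    · have h1 : ∑ p ∈ s, (v p - 1/2)*B p u = 0 :=
        Finset.sum_eq_zero fun p hp => by rw [hall p hp, mul_zero]
      rw [h1]; norm_num
    · push_neg at hall
      obtain ⟨p0, hp0, hp0ne⟩ := hall
      have hsum : ∑ p ∈ s, (v p - 1/2)*B p u = (v p0 - 1/2)*B p0 u := by
        apply Finset.sum_eq_single_of_mem p0 hp0
        intro q hq hqne
        have hq0 : B q u = 0 := by
          by_contra hq0
          have d1 := hBpos _ _ hq0
          have d2 := hBpos _ _ hp0ne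
          have d3 := hsep q hq p0 hp0 hqne
          have d4 : dist q p0 ≤ dist q u + dist u p0 := dist_triangle _ _ _
          rw [dist_comm q u] at d4
          linarith
        rw [hq0, mul_zero]
      rw [hsum]
      obtain ⟨hv0, hv1⟩ := hv p0 hp0
      have t0 := hB0 p0 u
      have t1 := hB1 p0 u
      constructor <;> nlinarith
  · intro p hp
    show 1/2 + ∑ q ∈ s, (v q - 1/2) * B q p = v p
    have h1 : ∑ q ∈ s, (v q - 1/2)*B q p = (v p - 1/2)*B p p := by
      apply Finset.sum_eq_single_of_mem p hp
      intro q hq hqp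
      rw [hBzero p hp q hq hqp, mul_zero]
    rw [h1, hBpp]; ring


open scoped Classical in
lemma ncard_fin2 (P : Fin 2 → Prop) :
    {j : Fin 2 | P j}.ncard = (if P 0 then 1 else 0) + (if P 1 then 1 else 0) := by
  by_cases h0 : P 0 <;> by_cases h1 : P 1
  · have : {j : Fin 2 | P j} = Set.univ := by
      ext j; fin_cases j <;> simp [h0, h1]
    rw [this, Set.ncard_univ]; simp [h0, h1]
  · have : {j : Fin 2 | P j} = {0} := by
      ext j; fin_cases j <;> simp [h0, h1]
    rw [this, Set.ncard_singleton]; simp [h0, h1]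
  · have : {j : Fin 2 | P j} = {1} := by
      ext j; fin_cases j <;> simp [h0, h1]
    rw [this, Set.ncard_singleton]; simp [h0, h1]
  · have : {j : Fin 2 | P j} = ∅ := by
      ext j; fin_cases j <;> simp [h0, h1]
    rw [this, Set.ncard_empty]; simp [h0, h1]

lemma log_half : Real.log (1/2 : ℝ) = -Real.log 2 := by
  rw [one_div, Real.log_inv]

lemma log_sq_le {t : ℝ} (h0 : 0 < t) (h1 : t < 1) :
    Real.log t + Real.log (1 - t) ≤ -(2 * Real.log 2) := by
  have hne : t ≠ 0 := ne_of_gt h0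
  have h2 : (0:ℝ) < 1 - t := by linarith
  rw [← Real.log_mul hne (ne_of_gt h2)]
  have hle : t * (1 - t) ≤ 1/4 := by nlinarith [sq_nonneg (t - 1/2)]
  calc Real.log (t * (1-t)) ≤ Real.log (1/4) := Real.log_le_log (by positivity) hle
    _ = -(2 * Real.log 2) := by
        rw [show (1:ℝ)/4 = ((2:ℝ)^2)⁻¹ by norm_num, Real.log_inv, Real.log_pow]
        push_cast; ring

lemma log_third_le {t : ℝ} (h0 : 0 < t) (h1 : t < 1) :
    Real.log t + 2 * Real.log (1 - t) ≤ Real.log (1/3) + 2 * Real.log (2/3) := by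
  have h2 : (0:ℝ) < 1 - t := by linarith
  have e1 : Real.log t + 2 * Real.log (1 - t) = Real.log (t * (1-t)^2) := by
    rw [Real.log_mul (ne_of_gt h0) (by positivity), Real.log_pow]
    push_cast; ring
  have e2 : Real.log (1/3 : ℝ) + 2 * Real.log (2/3) = Real.log ((1/3) * (2/3)^2 : ℝ) := by
    rw [Real.log_mul (by norm_num) (by norm_num), Real.log_pow]
    push_cast; ring
  rw [e1, e2]
  apply Real.log_le_log (by positivity)
  nlinarith [mul_nonneg (sq_nonneg (3*t - 1)) (by linarith : (0:ℝ) ≤ 4 - 3*t)]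

lemma log_nonpos' {t : ℝ} (h0 : 0 < t) (h1 : t < 1) : Real.log t ≤ 0 :=
  Real.log_nonpos h0.le h1.le

lemma phi_eq {d : ℕ} (x Y : Fin 2 → EuclideanSpace ℝ (Fin d)) (c : ℝ)
    (hub : ∀ D : EuclideanSpace ℝ (Fin d) → ℝ, (∀ u, D u ∈ Set.Ioo (0:ℝ) 1) →
      (1/4 : ℝ) * ∑ i, (Real.log (D (x i)) + Real.log (1 - D (Y i))) ≤ c)
    (hex : ∀ w, w < c → ∃ D : EuclideanSpace ℝ (Fin d) → ℝ, Continuous D ∧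
      (∀ u, D u ∈ Set.Ioo (0:ℝ) 1) ∧
      w < (1/4 : ℝ) * ∑ i, (Real.log (D (x i)) + Real.log (1 - D (Y i)))) :
    phiJS x Y = c := by
  have hco : (1 / (2 * ((2:ℕ) : ℝ))) = (1/4 : ℝ) := by norm_num
  unfold phiJS
  apply csSup_eq_of_forall_le_of_forall_lt_exists_gt
  · obtain ⟨D, hD, hr, _⟩ := hex (c-1) (by linarith)
    exact ⟨_, D, hD, hr, rfl⟩
  · rintro a ⟨D, hD, hr, rfl⟩
    rw [hco]; exact hub D hr
  · intro w hw
    obtain ⟨D, hD, hr, hv⟩ := hex w hw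
    exact ⟨_, ⟨D, hD, hr, rfl⟩, by rw [hco]; exact hv⟩

lemma phiJS_swapY {d : ℕ} (x Y : Fin 2 → EuclideanSpace ℝ (Fin d)) :
    phiJS x ![Y 1, Y 0] = phiJS x Y := by
  unfold phiJS
  congr 1
  ext s
  constructor <;> rintro ⟨D, hc, hr, rfl⟩ <;>
    refine ⟨D, hc, hr, ?_⟩ <;>
    · rw [Fin.sum_univ_two, Fin.sum_univ_two]
      simp only [Matrix.cons_val_zero, Matrix.cons_val_one, Matrix.head_cons]
      ring

lemma phiJS_swapX {d : ℕ} (x Y : Fin 2 → EuclideanSpace ℝ (Fin d)) :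
    phiJS ![x 1, x 0] Y = phiJS x Y := by
  unfold phiJS
  congr 1
  ext s
  constructor <;> rintro ⟨D, hc, hr, rfl⟩ <;>
    refine ⟨D, hc, hr, ?_⟩ <;>
    · rw [Fin.sum_univ_two, Fin.sum_univ_two]
      simp only [Matrix.cons_val_zero, Matrix.cons_val_one, Matrix.head_cons]
      ring

lemma case11 {d : ℕ} (x Y : Fin 2 → EuclideanSpace ℝ (Fin d))
    (h0 : Y 0 = x 0) (h1 : Y 1 = x 1) : phiJS x Y = -Real.log 2 := by
  apply phi_eq
  · intro D hr
    rw [Fin.sum_univ_two, h0, h1]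
    obtain ⟨a0, a1⟩ := hr (x 0)
    obtain ⟨b0, b1⟩ := hr (x 1)
    have e1 := log_sq_le a0 a1
    have e2 := log_sq_le b0 b1
    linarith
  · intro w hw
    refine ⟨fun _ => 1/2, continuous_const, fun u => ⟨by norm_num, by norm_num⟩, ?_⟩
    rw [Fin.sum_univ_two]
    have e : (1:ℝ) - 1/2 = 1/2 := by norm_num
    rw [e, log_half]
    linarith

lemma case20 {d : ℕ} (x Y : Fin 2 → EuclideanSpace ℝ (Fin d)) (hx : x 0 ≠ x 1)
    (h0 : Y 0 = x 0) (h1 : Y 1 = x 0) :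
    phiJS x Y = (1/4) * Real.log (1/3) + (1/2) * Real.log (2/3) := by
  apply phi_eq
  · intro D hr
    rw [Fin.sum_univ_two, h0, h1]
    obtain ⟨a0, a1⟩ := hr (x 0)
    obtain ⟨b0, b1⟩ := hr (x 1)
    have e1 := log_third_le a0 a1
    have e2 := log_nonpos' b0 b1
    linarith
  · intro w hw
    classical
    obtain ⟨b, hlb, hb0, hb1⟩ :
        ∃ b : ℝ, Real.log b = 2*(w - ((1/4) * Real.log (1/3) + (1/2) * Real.log (2/3)))
          ∧ 0 < b ∧ b < 1 :=
      ⟨Real.exp _, Real.log_exp _, Real.exp_pos _, Real.exp_lt_one_iff.2 (by linarith)⟩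
    obtain ⟨D, hD, hr, hval⟩ := exists_interp ({x 0, x 1} : Finset _)
      (fun u => if u = x 0 then 1/3 else b)
      (by
        intro p hp
        show (if p = x 0 then (1/3:ℝ) else b) ∈ Set.Ioo (0:ℝ) 1
        split_ifs
        · norm_num
        · exact ⟨hb0, hb1⟩)
    refine ⟨D, hD, hr, ?_⟩
    have hD0 : D (x 0) = 1/3 := by rw [hval (x 0) (by simp)]; simp
    have hD1 : D (x 1) = b := by
      rw [hval (x 1) (by simp)]
      exact if_neg (fun h => hx h.symm)
    rw [Fin.sum_univ_two, h0, h1, hD0, hD1]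
    have e : (1:ℝ) - 1/3 = 2/3 := by norm_num
    rw [e, hlb]
    linarith
  
lemma case10 {d : ℕ} (x Y : Fin 2 → EuclideanSpace ℝ (Fin d)) (hx : x 0 ≠ x 1)
    (h0 : Y 0 = x 0) (hz0 : Y 1 ≠ x 0) (hz1 : Y 1 ≠ x 1) :
    phiJS x Y = -(1/2) * Real.log 2 := by
  apply phi_eq
  · intro D hr
    rw [Fin.sum_univ_two, h0]
    obtain ⟨a0, a1⟩ := hr (x 0)
    obtain ⟨b0, b1⟩ := hr (x 1)
    obtain ⟨c0, c1⟩ := hr (Y 1)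
    have e1 := log_sq_le a0 a1
    have e2 := log_nonpos' b0 b1
    have e3 := log_nonpos' (by linarith : (0:ℝ) < 1 - D (Y 1)) (by linarith)
    linarith
  · intro w hw
    classical
    obtain ⟨b, hlb, hb0, hb1⟩ :
        ∃ b : ℝ, Real.log b = w - (-(1/2) * Real.log 2) ∧ 0 < b ∧ b < 1 :=
      ⟨Real.exp _, Real.log_exp _, Real.exp_pos _, Real.exp_lt_one_iff.2 (by linarith)⟩
    obtain ⟨D, hD, hr, hval⟩ := exists_interp ({x 0, x 1, Y 1} : Finset _)
      (fun u => if u = x 0 then 1/2 else if u = x 1 then b else 1 - b)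
      (by
        intro p hp
        show (if p = x 0 then (1/2:ℝ) else if p = x 1 then b else 1 - b) ∈ Set.Ioo (0:ℝ) 1
        split_ifs
        · norm_num
        · exact ⟨hb0, hb1⟩
        · constructor <;> linarith)
    refine ⟨D, hD, hr, ?_⟩
    have hD0 : D (x 0) = 1/2 := by rw [hval (x 0) (by simp)]; simp
    have hD1 : D (x 1) = b := by
      rw [hval (x 1) (by simp), if_neg (fun h => hx h.symm)]
      exact if_pos rfl
    have hDz : D (Y 1) = 1 - b := by
      rw [hval (Y 1) (by simp), if_neg hz0, if_neg hz1]
    rw [Fin.sum_univ_two, h0, hD0, hD1, hDz]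
    have e : (1:ℝ) - 1/2 = 1/2 := by norm_num
    have e2 : (1:ℝ) - (1 - b) = b := by ring
    rw [e, e2, log_half, hlb]
    linarith

lemma case00 {d : ℕ} (x Y : Fin 2 → EuclideanSpace ℝ (Fin d))
    (h00 : Y 0 ≠ x 0) (h01 : Y 0 ≠ x 1) (h10 : Y 1 ≠ x 0) (h11 : Y 1 ≠ x 1) :
    phiJS x Y = 0 := by
  apply phi_eq
  · intro D hr
    rw [Fin.sum_univ_two]
    obtain ⟨a0, a1⟩ := hr (x 0)
    obtain ⟨b0, b1⟩ := hr (x 1)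
    obtain ⟨c0, c1⟩ := hr (Y 0)
    obtain ⟨d0, d1⟩ := hr (Y 1)
    have e1 := log_nonpos' a0 a1
    have e2 := log_nonpos' b0 b1
    have e3 := log_nonpos' (by linarith : (0:ℝ) < 1 - D (Y 0)) (by linarith)
    have e4 := log_nonpos' (by linarith : (0:ℝ) < 1 - D (Y 1)) (by linarith)
    linarith
  · intro w hw
    classical
    obtain ⟨b, hlb, hb0, hb1⟩ : ∃ b : ℝ, Real.log b = w/2 ∧ 0 < b ∧ b < 1 :=
      ⟨Real.exp _, Real.log_exp _, Real.exp_pos _, Real.exp_lt_one_iff.2 (by linarith)⟩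
    obtain ⟨D, hD, hr, hval⟩ := exists_interp ({x 0, x 1, Y 0, Y 1} : Finset _)
      (fun u => if u = x 0 then b else if u = x 1 then b else 1 - b)
      (by
        intro p hp
        show (if p = x 0 then b else if p = x 1 then b else 1 - b) ∈ Set.Ioo (0:ℝ) 1
        split_ifs
        · exact ⟨hb0, hb1⟩
        · exact ⟨hb0, hb1⟩
        · constructor <;> linarith)
    refine ⟨D, hD, hr, ?_⟩
    have hD0 : D (x 0) = b := by rw [hval (x 0) (by simp)]; simp
    have hD1 : D (x 1) = b := by
      rw [hval (x 1) (by simp)]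
      split_ifs with hA hB
      · rfl
      · rfl
      · exact absurd rfl hB
    have hE0 : D (Y 0) = 1 - b := by
      rw [hval (Y 0) (by simp), if_neg h00, if_neg h01]
    have hE1 : D (Y 1) = 1 - b := by
      rw [hval (Y 1) (by simp), if_neg h10, if_neg h11]
    rw [Fin.sum_univ_two, hD0, hD1, hE0, hE1]
    have e2 : (1:ℝ) - (1 - b) = b := by ring
    rw [e2, hlb]
    linarith


lemma if_sum_eq_one {a b : Prop} [Decidable a] [Decidable b]
    (h : (if a then 1 else 0) + (if b then 1 else 0) = 1) : (a ∧ ¬b) ∨ (¬a ∧ b) := by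
  by_cases h1 : a <;> by_cases h2 : b <;> simp [h1, h2] at h ⊢

lemma if_sum_eq_zero {a b : Prop} [Decidable a] [Decidable b]
    (h : (if a then 1 else 0) + (if b then 1 else 0) = 0) : ¬a ∧ ¬b := by
  by_cases h1 : a <;> by_cases h2 : b <;> simp [h1, h2] at h ⊢

lemma if_sum_eq_two {a b : Prop} [Decidable a] [Decidable b]
    (h : (if a then 1 else 0) + (if b then 1 else 0) = 2) : a ∧ b := by
  by_cases h1 : a <;> by_cases h2 : b <;> simp [h1, h2] at h ⊢

theorem stmt6 {d : ℕ} (hd : 1 ≤ d)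
    (x : Fin 2 → EuclideanSpace ℝ (Fin d)) (hx : x 0 ≠ x 1)
    (Y : Fin 2 → EuclideanSpace ℝ (Fin d))
    (m : Fin 2 → ℕ) (hm : ∀ k, m k = Set.ncard {j : Fin 2 | Y j = x k}) :
    ((m 0 = 1 ∧ m 1 = 1) → phiJS x Y = -Real.log 2) ∧
    (((m 0 = 1 ∧ m 1 = 0) ∨ (m 0 = 0 ∧ m 1 = 1)) →
      phiJS x Y = -(1 / 2) * Real.log 2) ∧
    (((m 0 = 2 ∧ m 1 = 0) ∨ (m 0 = 0 ∧ m 1 = 2)) →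
      phiJS x Y = (1 / 4) * Real.log (1 / 3) + (1 / 2) * Real.log (2 / 3)) ∧
    ((m 0 = 0 ∧ m 1 = 0) → phiJS x Y = 0) := by
  classical
  have e0 : m 0 = (if Y 0 = x 0 then 1 else 0) + (if Y 1 = x 0 then 1 else 0) := by
    rw [hm 0]; convert ncard_fin2 (fun j => Y j = x 0)
  have e1 : m 1 = (if Y 0 = x 1 then 1 else 0) + (if Y 1 = x 1 then 1 else 0) := by
    rw [hm 1]; convert ncard_fin2 (fun j => Y j = x 1)
  have hx' : (![x 1, x 0] : Fin 2 → EuclideanSpace ℝ (Fin d)) 0 ≠ ![x 1, x 0] 1 := by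
    simpa using hx.symm
  refine ⟨?_, ?_, ?_, ?_⟩
  · rintro ⟨ha, hb⟩
    rcases if_sum_eq_one (by rw [← e0, ha]) with ⟨q1, q2⟩ | ⟨q1, q2⟩ <;>
      rcases if_sum_eq_one (by rw [← e1, hb]) with ⟨r1, r2⟩ | ⟨r1, r2⟩
    · exact absurd (q1.symm.trans r1) hx
    · exact case11 x Y q1 r2
    · rw [← phiJS_swapY]
      exact case11 x ![Y 1, Y 0] (by simpa using q2) (by simpa using r1)
    · exact absurd (q2.symm.trans r2) hx
  · rintro (⟨ha, hb⟩ | ⟨ha, hb⟩)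
    · obtain ⟨r1, r2⟩ := if_sum_eq_zero (by rw [← e1, hb])
      rcases if_sum_eq_one (by rw [← e0, ha]) with ⟨q1, q2⟩ | ⟨q1, q2⟩
      · exact case10 x Y hx q1 q2 r2
      · rw [← phiJS_swapY]
        exact case10 x ![Y 1, Y 0] hx (by simpa using q2) (by simpa using q1)
          (by simpa using r1)
    · obtain ⟨r1, r2⟩ := if_sum_eq_zero (by rw [← e0, ha])
      rw [← phiJS_swapX]
      rcases if_sum_eq_one (by rw [← e1, hb]) with ⟨q1, q2⟩ | ⟨q1, q2⟩
      · exact case10 ![x 1, x 0] Y hx' (by simpa using q1) (by simpa using q2)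
          (by simpa using r2)
      · rw [← phiJS_swapY]
        exact case10 ![x 1, x 0] ![Y 1, Y 0] hx' (by simpa using q2) (by simpa using q1)
          (by simpa using r1)
  · rintro (⟨ha, hb⟩ | ⟨ha, hb⟩)
    · obtain ⟨q1, q2⟩ := if_sum_eq_two (by rw [← e0, ha])
      exact case20 x Y hx q1 q2
    · obtain ⟨q1, q2⟩ := if_sum_eq_two (by rw [← e1, hb])
      rw [← phiJS_swapX]
      exact case20 ![x 1, x 0] Y hx' (by simpa using q1) (by simpa using q2)
  · rintro ⟨ha, hb⟩
    obtain ⟨q1, q2⟩ := if_sum_eq_zero (by rw [← e0, ha])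
    obtain ⟨r1, r2⟩ := if_sum_eq_zero (by rw [← e1, hb])
    exact case00 x Y q1 r1 q2 r2
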